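/- Let q = 2^e with q > 4 (i.e., e ≥ 3). Then for no dimension v does there exist a 2-divisible set of points S in PG(v−1,q) with |S| = q+3. -/

import Mathlib

open Module Finset
open Matrix

noncomputable section
open scoped Classical

variable (F : Type) [Field F] [Fintype F]

instance finiteSubmodule (v : ℕ) : Finite (Submodule F (Fin v → F)) :=
  Finite.of_injective (fun s => (s : Set (Fin v → F))) SetLike.coe_injective

/-- The points of `PG(v-1,q)`: one-dimensional subspaces of `F_q^v`. -/
abbrev PGPoint (v : ℕ) := {W : Submodule F (Fin v → F) // finrank F W = 1}

instance (v : ℕ) : Fintype (PGPoint F v) := Fintype.ofFinite _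

/-- Cardinality of a multiset of points. -/
def mCard {v : ℕ} (M : PGPoint F v → ℕ) : ℕ := ∑ P, M P

/-- Multiplicity of a subspace: the sum of multiplicities over points contained in it. -/
def mVal {v : ℕ} (M : PGPoint F v → ℕ) (S : Submodule F (Fin v → F)) : ℕ :=
  ∑ P : PGPoint F v, if P.1 ≤ S then M P else 0

/-- A multiset of points is `Δ`-divisible if `#M ≡ M(H) (mod Δ)` for every hyperplane `H`. -/
def IsDivisibleMultiset {v : ℕ} (Δ : ℕ) (M : PGPoint F v → ℕ) : Prop :=
  ∀ H : Submodule F (Fin v → F), finrank F H = v - 1 → mCard F M ≡ mVal F M H [MOD Δ]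

/-- A set of points is `Δ`-divisible if `|S| ≡ |S ∩ H| (mod Δ)` for every hyperplane `H`. -/
def IsDivisibleSet {v : ℕ} (Δ : ℕ) (S : Set (PGPoint F v)) : Prop :=
  ∀ H : Submodule F (Fin v → F), finrank F H = v - 1 →
    S.ncard ≡ (S ∩ {P | P.1 ≤ H}).ncard [MOD Δ]

/-- A linear code `C ≤ F_q^m` is `Δ`-divisible if all Hamming weights are divisible by `Δ`. -/
def IsDivisibleCode {m : ℕ} (Δ : ℕ) (C : Submodule F (Fin m → F)) : Prop :=
  ∀ c ∈ C, Δ ∣ hammingNorm c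

/-- The effective length: the number of coordinates where some codeword is nonzero. -/
def effLength {m : ℕ} (C : Submodule F (Fin m → F)) : ℕ :=
  Nat.card {i : Fin m // ∃ c ∈ C, c i ≠ 0}

/-- `s_q(a,b,i)`, with `q = p^e`, written without division:
`s_q(a,b,0) = 1 + q + ⋯ + q^a` and `s_q(a,b,i) = p^{ie-b}·(1 + q + ⋯ + q^{a-i})` for `i ≥ 1`. -/
def sQ (p e a b i : ℕ) : ℕ :=
  if i = 0 then ∑ j ∈ Finset.range (a + 1), (p ^ e) ^ j
  else p ^ (i * e - b) * ∑ j ∈ Finset.range (a - i + 1), (p ^ e) ^ j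


section AuxLemmas
variable {K : Type} [Field K] [Fintype K]

/-- The linear functional given by dot product with `y`. -/
def dotLin {v : ℕ} (y : Fin v → K) : (Fin v → K) →ₗ[K] K where
  toFun x := y ⬝ᵥ x
  map_add' a b := by simp [dotProduct_add]
  map_smul' c a := by simp [dotProduct_smul]

@[simp] lemma dotLin_apply {v : ℕ} (y x : Fin v → K) : dotLin y x = y ⬝ᵥ x := rfl

lemma finrank_ker_dotLin {v : ℕ} {y : Fin v → K} (hy : y ≠ 0) :
    finrank K (LinearMap.ker (dotLin y)) + 1 = v := by
  obtain ⟨j, hj⟩ : ∃ j, y j ≠ 0 := by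
    by_contra h; push_neg at h; exact hy (funext h)
  have hsurj : Function.Surjective (dotLin y) := by
    intro c
    refine ⟨(c * (y j)⁻¹) • (Pi.single j 1 : Fin v → K), ?_⟩
    simp [dotLin, dotProduct_smul, dotProduct_single, smul_eq_mul]
    field_simp
  have h := LinearMap.finrank_range_add_finrank_ker (dotLin y)
  rw [LinearMap.range_eq_top.mpr hsurj, finrank_top] at h
  simp only [Module.finrank_self, Module.finrank_fintype_fun_eq_card,
    Fintype.card_fin] at h
  omega

lemma exists_rep {v : ℕ} (P : {W : Submodule K (Fin v → K) // finrank K W = 1}) :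
    ∃ x : Fin v → K, x ≠ 0 ∧ P.1 = Submodule.span K {x} := by
  have h := P.2
  rw [finrank_eq_one_iff'] at h
  obtain ⟨w, hw0, hw⟩ := h
  refine ⟨(w : Fin v → K), by simpa using hw0, le_antisymm ?_ ?_⟩
  · intro x hx
    obtain ⟨c, hc⟩ := hw ⟨x, hx⟩
    have : c • (w : Fin v → K) = x := by simpa using congrArg Subtype.val hc
    exact this ▸ Submodule.smul_mem _ _ (Submodule.mem_span_singleton_self _)
  · rw [Submodule.span_singleton_le_iff_mem]; exact w.2

/-- Key counting lemma: the "perp" of a subspace `W` (w.r.t. the dot product)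
has cardinality `q ^ (v - dim W)`, in product form. -/
lemma card_perp {v : ℕ} (W : Submodule K (Fin v → K)) :
    ((univ : Finset (Fin v → K)).filter fun z => ∀ w ∈ W, z ⬝ᵥ w = 0).card *
      (Fintype.card K) ^ (finrank K W) = (Fintype.card K) ^ v := by
  let Φ : (Fin v → K) →ₗ[K] Module.Dual K (Fin v → K) :=
    { toFun := fun z => dotLin z
      map_add' := by intro a b; ext x; simp [add_dotProduct]
      map_smul' := by intro c a; ext x; simp [smul_dotProduct] }
  have hinj : Function.Injective Φ := by
    intro a b hab
    funext i
    have := congrArg (fun f => f (Pi.single i 1)) hab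
    simpa [Φ, dotProduct_single] using this
  have hbij : Function.Bijective Φ :=
    ⟨hinj, (LinearMap.injective_iff_surjective_of_finrank_eq_finrank
      (Subspace.dual_finrank_eq).symm).mp hinj⟩
  let e : (Fin v → K) ≃ₗ[K] Module.Dual K (Fin v → K) := LinearEquiv.ofBijective Φ hbij
  set Wp : Submodule K (Fin v → K) := W.dualAnnihilator.comap (e : (Fin v → K) →ₗ[K] _) with hWp
  have hmem : ∀ z, z ∈ Wp ↔ ∀ w ∈ W, z ⬝ᵥ w = 0 := by
    intro z
    rw [hWp, Submodule.mem_comap, Submodule.mem_dualAnnihilator]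
    exact Iff.rfl
  have h1 : finrank K Wp = finrank K W.dualAnnihilator := by
    rw [hWp, Submodule.comap_equiv_eq_map_symm]
    exact LinearEquiv.finrank_map_eq _ _
  have h2 : finrank K W.dualAnnihilator = finrank K ((Fin v → K) ⧸ W) :=
    (LinearEquiv.finrank_eq (Subspace.quotEquivAnnihilator W)).symm
  have h3 : finrank K ((Fin v → K) ⧸ W) + finrank K W = v := by
    rw [Submodule.finrank_quotient_add_finrank]
    simp [Module.finrank_fintype_fun_eq_card]
  have hcard : ((univ : Finset (Fin v → K)).filter fun z => ∀ w ∈ W, z ⬝ᵥ w = 0).card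
      = Fintype.card K ^ finrank K Wp := by
    rw [← Fintype.card_subtype]
    rw [Fintype.card_congr (Equiv.subtypeEquivRight (fun z => (hmem z).symm))]
    exact card_eq_pow_finrank
  rw [hcard, ← pow_add, h1, h2, h3]

lemma card_perp_one {v : ℕ} {d : Fin v → K} (hd : d ≠ 0) :
    ((univ : Finset (Fin v → K)).filter fun z => z ⬝ᵥ d = 0).card *
      (Fintype.card K) = (Fintype.card K) ^ v := by
  have h := card_perp (K := K) (Submodule.span K {d})
  rw [finrank_span_singleton hd, pow_one] at h
  rw [← h]
  congr 2
  apply Finset.filter_congr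
  intro z _
  constructor
  · intro hz
    intro w hw
    rw [Submodule.mem_span_singleton] at hw
    obtain ⟨a, rfl⟩ := hw
    rw [dotProduct_smul, hz, smul_zero]
  · intro hz; exact hz d (Submodule.mem_span_singleton_self d)

lemma not_mem_span_symm {v : ℕ} {d p : Fin v → K} (hp : p ≠ 0)
    (h : d ∉ Submodule.span K {p}) : p ∉ Submodule.span K {d} := by
  intro hmem
  rw [Submodule.mem_span_singleton] at hmem
  obtain ⟨a, ha⟩ := hmem
  have ha0 : a ≠ 0 := by rintro rfl; simp at ha; exact hp ha.symm
  apply h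
  rw [Submodule.mem_span_singleton]
  exact ⟨a⁻¹, by rw [← ha, smul_smul, inv_mul_cancel₀ ha0, one_smul]⟩

lemma card_perp_two {v : ℕ} {d p : Fin v → K} (hd : d ≠ 0)
    (hp : p ∉ Submodule.span K {d}) :
    ((univ : Finset (Fin v → K)).filter fun z => z ⬝ᵥ d = 0 ∧ z ⬝ᵥ p = 0).card *
      (Fintype.card K) ^ 2 = (Fintype.card K) ^ v := by
  have h := card_perp (K := K) (Submodule.span K ({d, p} : Set (Fin v → K)))
  have hrank : finrank K (Submodule.span K ({d, p} : Set (Fin v → K))) = 2 := by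
    have hle : Submodule.span K {d} < Submodule.span K ({d, p} : Set (Fin v → K)) := by
      rw [SetLike.lt_iff_le_and_exists]
      refine ⟨Submodule.span_mono (by simp), p, Submodule.subset_span (by simp), hp⟩
    have h1 : 1 < finrank K (Submodule.span K ({d, p} : Set (Fin v → K))) := by
      have := Submodule.finrank_lt_finrank_of_lt hle
      rwa [finrank_span_singleton hd] at this
    have h2 : finrank K (Submodule.span K ({d, p} : Set (Fin v → K))) ≤ 2 := by
      have : ({d, p} : Set (Fin v → K)) = insert d {p} := rfl
      rw [this, Submodule.span_insert]
      have := Submodule.finrank_sup_add_finrank_inf_eq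
        (Submodule.span K ({d} : Set (Fin v → K))) (Submodule.span K ({p} : Set (Fin v → K)))
      have hd1 : finrank K (Submodule.span K ({d} : Set (Fin v → K))) = 1 :=
        finrank_span_singleton hd
      have hp1 : finrank K (Submodule.span K ({p} : Set (Fin v → K))) ≤ 1 := by
        by_cases hp0 : p = 0
        · subst hp0
          rw [Submodule.span_zero_singleton]
          simp
        · rw [finrank_span_singleton hp0]
      omega
    omega
  rw [hrank] at h
  rw [← h]
  congr 2
  apply Finset.filter_congr
  intro z _
  constructor
  · rintro ⟨hz1, hz2⟩ w hw
    rw [Submodule.mem_span_pair] at hw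
    obtain ⟨a, b, rfl⟩ := hw
    rw [dotProduct_add, dotProduct_smul, dotProduct_smul, hz1, hz2]
    simp
  · intro hz
    exact ⟨hz d (Submodule.subset_span (by simp)), hz p (Submodule.subset_span (by simp))⟩

lemma exists_perp_ne {v : ℕ} {d1 d2 p : Fin v → K}
    (hp : p ∉ Submodule.span K ({d1, d2} : Set (Fin v → K))) :
    ∃ z : Fin v → K, z ⬝ᵥ d1 = 0 ∧ z ⬝ᵥ d2 = 0 ∧ z ⬝ᵥ p ≠ 0 := by
  set W : Submodule K (Fin v → K) := Submodule.span K ({d1, d2} : Set (Fin v → K)) with hW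
  set W' : Submodule K (Fin v → K) :=
    Submodule.span K (insert p ({d1, d2} : Set (Fin v → K))) with hW'
  have hWW' : W < W' := by
    rw [SetLike.lt_iff_le_and_exists]
    exact ⟨Submodule.span_mono (Set.subset_insert _ _), p,
      Submodule.subset_span (Set.mem_insert _ _), hp⟩
  have hfr : finrank K W < finrank K W' := Submodule.finrank_lt_finrank_of_lt hWW'
  have hfr' : finrank K W' ≤ v := by
    have := Submodule.finrank_le W'
    simpa [Module.finrank_fintype_fun_eq_card] using this
  set s1 : Finset (Fin v → K) := univ.filter fun z => ∀ w ∈ W, z ⬝ᵥ w = 0 with hs1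
  set s2 : Finset (Fin v → K) := univ.filter fun z => ∀ w ∈ W', z ⬝ᵥ w = 0 with hs2
  have hsub : s2 ⊆ s1 := by
    intro z hz
    rw [hs2, Finset.mem_filter] at hz
    rw [hs1, Finset.mem_filter]
    exact ⟨hz.1, fun w hw => hz.2 w (hWW'.le hw)⟩
  have hq1 : 1 < Fintype.card K := Fintype.one_lt_card
  have hc1 := card_perp (K := K) W
  have hc2 := card_perp (K := K) W'
  have hlt : s2.card < s1.card := by
    by_contra hcon
    push_neg at hcon
    have h1 : s1.card * Fintype.card K ^ finrank K W <
        s2.card * Fintype.card K ^ finrank K W' := by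
      have hs1pos : 0 < s1.card := by
        rcases Nat.eq_zero_or_pos s1.card with h | h
        · exfalso
          rw [h, zero_mul] at hc1
          exact (Nat.pos_of_ne_zero (by positivity)).ne' hc1.symm
        · exact h
      calc s1.card * Fintype.card K ^ finrank K W
          < s1.card * Fintype.card K ^ finrank K W' := by
            exact mul_lt_mul_of_pos_left (Nat.pow_lt_pow_right hq1 hfr) hs1pos
        _ ≤ s2.card * Fintype.card K ^ finrank K W' := by
            apply Nat.mul_le_mul_right
            exact hcon
    rw [hc1, hc2] at h1
    exact lt_irrefl _ h1
  have hne : (s1 \ s2).Nonempty := by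
    rw [← Finset.card_pos, Finset.card_sdiff_of_subset hsub]
    omega
  obtain ⟨z, hz⟩ := hne
  rw [Finset.mem_sdiff, hs1, hs2, Finset.mem_filter] at hz
  obtain ⟨⟨-, hzW⟩, hz2⟩ := hz
  have hd1 : z ⬝ᵥ d1 = 0 := hzW d1 (Submodule.subset_span (by simp))
  have hd2 : z ⬝ᵥ d2 = 0 := hzW d2 (Submodule.subset_span (by simp))
  refine ⟨z, hd1, hd2, ?_⟩
  intro hzp
  apply hz2
  rw [Finset.mem_filter]
  refine ⟨Finset.mem_univ _, ?_⟩
  intro w hw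
  rw [hW', Submodule.mem_span_insert] at hw
  obtain ⟨a, u, hu, rfl⟩ := hw
  rw [dotProduct_add, dotProduct_smul, hzp, hzW u hu]
  simp

lemma exists_avoid {v : ℕ} (hv : 1 ≤ v) (D : Finset (Fin v → K))
    (hD : D.card < Fintype.card K) (h0 : (0 : Fin v → K) ∉ D) :
    ∃ z : Fin v → K, ∀ d ∈ D, z ⬝ᵥ d ≠ 0 := by
  obtain ⟨m, rfl⟩ : ∃ m, v = m + 1 := ⟨v - 1, by omega⟩
  have hq0 : 0 < Fintype.card K := Fintype.card_pos
  have hZ : ∀ d ∈ D, ((univ : Finset (Fin (m+1) → K)).filter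
      fun z => z ⬝ᵥ d = 0).card = Fintype.card K ^ m := by
    intro d hd
    have hd0 : d ≠ 0 := fun h => h0 (h ▸ hd)
    have := card_perp_one (K := K) hd0
    rw [pow_succ] at this
    exact Nat.eq_of_mul_eq_mul_right hq0 this
  by_contra hcon
  push_neg at hcon
  set bad : Finset (Fin (m+1) → K) :=
    D.biUnion (fun d => univ.filter fun z => z ⬝ᵥ d = 0) with hbad
  have hsub : (univ : Finset (Fin (m+1) → K)) ⊆ bad := by
    intro z _
    obtain ⟨d, hd, hzd⟩ := hcon z
    rw [hbad, Finset.mem_biUnion]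
    exact ⟨d, hd, Finset.mem_filter.mpr ⟨Finset.mem_univ _, hzd⟩⟩
  have hcard : bad.card ≤ D.card * Fintype.card K ^ m := by
    calc bad.card ≤ ∑ d ∈ D, ((univ : Finset (Fin (m+1) → K)).filter
        fun z => z ⬝ᵥ d = 0).card := Finset.card_biUnion_le
      _ = ∑ _d ∈ D, Fintype.card K ^ m := Finset.sum_congr rfl hZ
      _ = D.card * Fintype.card K ^ m := by rw [Finset.sum_const, smul_eq_mul]
  have huniv : (univ : Finset (Fin (m+1) → K)).card = Fintype.card K ^ (m+1) := by
    rw [Finset.card_univ, Fintype.card_fun]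
    simp
  have hle := Finset.card_le_card hsub
  rw [huniv] at hle
  have : Fintype.card K ^ (m+1) ≤ D.card * Fintype.card K ^ m := le_trans hle hcard
  rw [pow_succ, mul_comm D.card (Fintype.card K ^ m)] at this
  have hpos : 0 < Fintype.card K ^ m := Nat.pos_of_ne_zero (by positivity)
  have := Nat.le_of_mul_le_mul_left this hpos
  omega

lemma sum_card_filter_comm {α β : Type*} (s : Finset α) (t : Finset β)
    (r : α → β → Prop) :
    ∑ a ∈ s, (t.filter (fun b => r a b)).card
      = ∑ b ∈ t, (s.filter (fun a => r a b)).card := by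
  simp_rw [Finset.card_filter]
  exact Finset.sum_comm

lemma card_offdiag_fiber {α β : Type*} [DecidableEq α] [DecidableEq β] (B : Finset α) (f : α → β) :
    (B.offDiag.filter fun z => f z.1 = f z.2).card
      = ∑ c ∈ B.image f,
          ((B.filter fun a => f a = c).card * ((B.filter fun a => f a = c).card - 1)) := by
  rw [Finset.card_eq_sum_card_fiberwise
    (f := fun z : α × α => f z.1) (t := B.image f) ?_]
  · apply Finset.sum_congr rfl
    intro c _
    have hset : ((B.offDiag.filter fun z => f z.1 = f z.2).filter
        fun z => f z.1 = c) = (B.filter fun a => f a = c).offDiag := by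
      ext z
      simp only [Finset.mem_filter, Finset.mem_offDiag]
      constructor
      · rintro ⟨⟨⟨h1, h2, h3⟩, h4⟩, h5⟩
        exact ⟨⟨h1, h5⟩, ⟨h2, h4 ▸ h5⟩, h3⟩
      · rintro ⟨⟨h1, h2⟩, ⟨h3, h4⟩, h5⟩
        exact ⟨⟨⟨h1, h3, h5⟩, by rw [h2, h4]⟩, h2⟩
    rw [hset, Finset.offDiag_card]
    rcases Nat.exists_eq_add_of_le (Nat.zero_le (B.filter fun a => f a = c).card) with ⟨k, hk⟩
    generalize (B.filter fun a => f a = c).card = k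
    rcases k with _ | n
    · rfl
    · have h1 : (n+1) * (n+1) = (n+1) * n + (n+1) := by ring
      have h2 : n + 1 - 1 = n := rfl
      rw [h1, h2]
      omega
  · intro z hz
    rw [Finset.mem_coe, Finset.mem_filter, Finset.mem_offDiag] at hz
    exact Finset.mem_image_of_mem f hz.1.1

lemma my_filter_split {α : Type*} (s : Finset α) (pr : α → Prop) :
    (s.filter pr).card + (s.filter (fun a => ¬ pr a)).card = s.card := by
  classical
  simp only [Finset.filter_not]
  rw [Finset.card_sdiff_of_subset (Finset.filter_subset _ _)]
  have h := Finset.card_filter_le s pr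
  omega

end AuxLemmas

set_option maxHeartbeats 1000000 in
/-- For even `q = 2^e > 4` there is no dimension `v` admitting a
`2`-divisible set of points of cardinality `q+3` in `PG(v-1,q)`. -/
theorem stmt_15 (e : ℕ) (he : 3 ≤ e) (hF : Fintype.card F = 2 ^ e) :
    ∀ v : ℕ, ¬ ∃ S : Set (PGPoint F v),
      IsDivisibleSet F 2 S ∧ S.ncard = 2 ^ e + 3 := by
  intro v
  rintro ⟨S, hdiv, hcard⟩
  classical
  set q := Fintype.card F with hq
  have hq8 : 8 ≤ q := by
    rw [hF]
    calc (8:ℕ) = 2^3 := rfl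
    _ ≤ 2^e := Nat.pow_le_pow_right (by norm_num) he
  have hq1 : 1 < q := by omega
  set Sf : Finset (PGPoint F v) := S.toFinset with hSf
  have hSfcard : Sf.card = q + 3 := by
    rw [hSf, ← Set.ncard_eq_toFinset_card', hcard, hF]
  choose xRep hx0 hxspan using fun P : PGPoint F v => exists_rep P
  have hodd3 : Odd (q + 3) := by
    rw [hF]
    have h2 : Even (2^e) := (Nat.even_pow).mpr ⟨even_two, by omega⟩
    exact h2.add_odd ⟨1, rfl⟩
  -- every hyperplane meets S in an odd number of points
  have key : ∀ y : Fin v → F, y ≠ 0 →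
      Odd ((Sf.filter fun P => y ⬝ᵥ xRep P = 0)).card := by
    intro y hy
    have hv1 : 1 ≤ v := by
      by_contra h
      push_neg at h
      have hv0 : v = 0 := by omega
      subst hv0
      exact hy (funext fun i => i.elim0)
    have hker := finrank_ker_dotLin (hy := hy)
    have hH := hdiv (LinearMap.ker (dotLin y)) (by omega)
    have h2 : (S ∩ {P : PGPoint F v | P.1 ≤ LinearMap.ker (dotLin y)}).ncard
        = ((Sf.filter fun P => y ⬝ᵥ xRep P = 0)).card := by
      rw [Set.ncard_eq_toFinset_card']
      congr 1
      ext P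
      simp only [Set.mem_toFinset, Set.mem_inter_iff, Set.mem_setOf_eq,
        Finset.mem_filter, hSf]
      apply and_congr Iff.rfl
      rw [hxspan P, Submodule.span_singleton_le_iff_mem, LinearMap.mem_ker, dotLin_apply]
    rw [hcard, h2] at hH
    have h3 : (2 ^ e + 3) % 2
        = ((Sf.filter fun P => y ⬝ᵥ xRep P = 0)).card % 2 := hH
    rw [Nat.odd_iff]
    rw [hF] at hodd3
    rw [Nat.odd_iff] at hodd3
    omega
  have hv1 : 1 ≤ v := by
    by_contra h
    push_neg at h
    have hv0 : v = 0 := by omega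
    subst hv0
    have : Sf.Nonempty := by rw [← Finset.card_pos, hSfcard]; omega
    obtain ⟨P, -⟩ := this
    have h1 := P.2
    have h2 : finrank F P.1 ≤ finrank F (Fin 0 → F) := Submodule.finrank_le P.1
    rw [Module.finrank_fintype_fun_eq_card, Fintype.card_fin] at h2
    omega
  have huniv : (univ : Finset (Fin v → F)).card = q ^ v := by
    rw [Finset.card_univ, Fintype.card_fun, Fintype.card_fin]
  -- there is a hyperplane meeting S in exactly one point
  have hEx : ∃ y₀ : Fin v → F, y₀ ≠ 0 ∧
      (Sf.filter fun P => y₀ ⬝ᵥ xRep P = 0).card = 1 := by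
    by_contra hcon
    push_neg at hcon
    set Y0 : Finset (Fin v → F) := univ.filter (fun y => y ≠ 0) with hY0
    have hY0card : Y0.card + 1 = q ^ v := by
      have h1 : Y0 = univ.erase 0 := by
        rw [hY0]
        ext z; simp [Finset.mem_erase, and_comm]
      rw [h1, Finset.card_erase_of_mem (Finset.mem_univ _), huniv]
      have : 0 < q ^ v := pow_pos (by omega : 0 < q) v
      omega
    have h3 : ∀ y ∈ Y0, 3 ≤ (Sf.filter fun P => y ⬝ᵥ xRep P = 0).card := by
      intro y hy
      rw [hY0, Finset.mem_filter] at hy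
      have hodd := key y hy.2
      have hne1 := hcon y hy.2
      rcases hodd with ⟨k, hk⟩
      omega
    have hsum1 : Y0.card * 3 ≤ ∑ y ∈ Y0, (Sf.filter fun P => y ⬝ᵥ xRep P = 0).card := by
      calc Y0.card * 3 = ∑ _y ∈ Y0, 3 := by rw [Finset.sum_const, smul_eq_mul]
      _ ≤ _ := Finset.sum_le_sum h3
    have hswap : (∑ y ∈ Y0, (Sf.filter fun P => y ⬝ᵥ xRep P = 0).card)
        = ∑ P ∈ Sf, (Y0.filter fun y => y ⬝ᵥ xRep P = 0).card :=
      sum_card_filter_comm Y0 Sf (fun y P => y ⬝ᵥ xRep P = 0)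
    obtain ⟨m, hm⟩ : ∃ m, v = m + 1 := ⟨v-1, by omega⟩
    have hinner : ∀ P ∈ Sf, (Y0.filter fun y => y ⬝ᵥ xRep P = 0).card + 1 = q ^ m := by
      intro P hP
      have hZ := card_perp_one (hx0 P)
      have hpowv : q ^ v = q ^ m * q := by rw [hm, pow_succ]
      rw [hpowv] at hZ
      have hZval : ((univ : Finset (Fin v → F)).filter fun y => y ⬝ᵥ xRep P = 0).card
          = q ^ m := Nat.eq_of_mul_eq_mul_right (by omega) hZ
      have hsetY : Y0.filter (fun y => y ⬝ᵥ xRep P = 0)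
          = ((univ : Finset (Fin v → F)).filter fun y => y ⬝ᵥ xRep P = 0).erase 0 := by
        ext z
        simp only [hY0, Finset.filter_filter, Finset.mem_filter, Finset.mem_erase,
          Finset.mem_univ, true_and]
        try tauto
      have hmem0 : (0 : Fin v → F) ∈ (univ.filter fun y => y ⬝ᵥ xRep P = 0) := by
        simp [zero_dotProduct]
      have hpos := Finset.card_pos.mpr ⟨(0 : Fin v → F), hmem0⟩
      rw [hsetY, Finset.card_erase_of_mem hmem0, hZval]
      rw [hZval] at hpos
      omega
    rw [hswap] at hsum1
    set T := ∑ P ∈ Sf, (Y0.filter fun y => y ⬝ᵥ xRep P = 0).card with hT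
    have htot : T + Sf.card = Sf.card * q ^ m := by
      calc T + Sf.card = ∑ P ∈ Sf, ((Y0.filter fun y => y ⬝ᵥ xRep P = 0).card + 1) := by
            rw [Finset.sum_add_distrib, Finset.sum_const, smul_eq_mul, mul_one]
      _ = ∑ _P ∈ Sf, q ^ m := Finset.sum_congr rfl hinner
      _ = Sf.card * q ^ m := by rw [Finset.sum_const, smul_eq_mul]
    set a := q ^ m with ha
    set b := q * a with hb
    have hqv : q ^ v = b := by
      rw [hb, ha, hm, pow_succ]
      exact mul_comm _ _
    have ha1 : 1 ≤ a := Nat.one_le_pow _ _ (by omega)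
    have hb8 : 8 * a ≤ b := by
      rw [hb]
      exact Nat.mul_le_mul hq8 (le_refl a)
    rw [hqv] at hY0card
    rw [hSfcard] at htot
    have hqa : (q + 3) * a = b + 3 * a := by rw [hb]; ring
    rw [hqa] at htot
    omega
  obtain ⟨y₀, hy₀ne, hy₀count⟩ := hEx
  rw [Finset.card_eq_one] at hy₀count
  obtain ⟨P₀, hP₀⟩ := hy₀count
  have hP₀mem : P₀ ∈ Sf ∧ y₀ ⬝ᵥ xRep P₀ = 0 :=
    Finset.mem_filter.mp (hP₀ ▸ Finset.mem_singleton_self P₀)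
  set p : Fin v → F := xRep P₀ with hpdef
  have hp0 : p ≠ 0 := hx0 P₀
  have hy₀p : y₀ ⬝ᵥ p = 0 := hP₀mem.2
  have hothers : ∀ P ∈ Sf, P ≠ P₀ → y₀ ⬝ᵥ xRep P ≠ 0 := by
    intro P hP hne h0
    have : P ∈ Sf.filter (fun P => y₀ ⬝ᵥ xRep P = 0) := Finset.mem_filter.mpr ⟨hP, h0⟩
    rw [hP₀, Finset.mem_singleton] at this
    exact hne this
  set u : PGPoint F v → (Fin v → F) := fun P => (y₀ ⬝ᵥ xRep P)⁻¹ • xRep P with hu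
  set A : Finset (PGPoint F v) := Sf.erase P₀ with hA
  have hAcard : A.card = q + 2 := by
    rw [hA, Finset.card_erase_of_mem hP₀mem.1, hSfcard]
    omega
  have hmemA : ∀ P ∈ A, P ∈ Sf ∧ P ≠ P₀ := fun P hP =>
    ⟨Finset.mem_of_mem_erase hP, Finset.ne_of_mem_erase hP⟩
  have hAsub : A ⊆ Sf := Finset.erase_subset _ _
  have hu1 : ∀ P ∈ A, y₀ ⬝ᵥ u P = 1 := by
    intro P hP
    obtain ⟨hPS, hPne⟩ := hmemA P hP
    show y₀ ⬝ᵥ ((y₀ ⬝ᵥ xRep P)⁻¹ • xRep P) = 1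
    rw [dotProduct_smul, smul_eq_mul, inv_mul_cancel₀ (hothers P hPS hPne)]
  have huspan : ∀ P ∈ A, P.1 = Submodule.span F {u P} := by
    intro P hP
    obtain ⟨hPS, hPne⟩ := hmemA P hP
    show P.1 = Submodule.span F {(y₀ ⬝ᵥ xRep P)⁻¹ • xRep P}
    rw [Submodule.span_singleton_smul_eq
      (IsUnit.mk0 _ (inv_ne_zero (hothers P hPS hPne))) _]
    exact hxspan P
  have huinj : ∀ P ∈ A, ∀ Q ∈ A, u P = u Q → P = Q := by
    intro P hP Q hQ h
    exact Subtype.ext (by rw [huspan P hP, huspan Q hQ, h])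
  have hune : ∀ P ∈ A, ∀ Q ∈ A, P ≠ Q → u P - u Q ≠ 0 := by
    intro P hP Q hQ hne h
    exact hne (huinj P hP Q hQ (sub_eq_zero.mp h))
  -- parity of affine fibers
  have hfib : ∀ y : Fin v → F, y ⬝ᵥ p ≠ 0 → ∀ c : F,
      Odd ((A.filter fun P => y ⬝ᵥ u P = c).card) := by
    intro y hyp c
    have hz0 : y - c • y₀ ≠ 0 := by
      intro h
      rw [sub_eq_zero] at h
      apply hyp
      rw [h, smul_dotProduct, hy₀p, smul_zero]
    have hk := key _ hz0
    have hset : Sf.filter (fun P => (y - c • y₀) ⬝ᵥ xRep P = 0)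
        = A.filter (fun P => y ⬝ᵥ u P = c) := by
      ext P
      simp only [Finset.mem_filter, hA, Finset.mem_erase]
      constructor
      · rintro ⟨hPS, hPz⟩
        have hPne : P ≠ P₀ := by
          rintro rfl
          rw [sub_dotProduct, smul_dotProduct, ← hpdef, hy₀p,
            smul_zero, sub_zero] at hPz
          exact hyp hPz
        have hnz := hothers P hPS hPne
        have hPA : P ∈ A := Finset.mem_erase.mpr ⟨hPne, hPS⟩
        refine ⟨⟨hPne, hPS⟩, ?_⟩
        have h1 : (y - c • y₀) ⬝ᵥ u P = 0 := by
          show (y - c • y₀) ⬝ᵥ ((y₀ ⬝ᵥ xRep P)⁻¹ • xRep P) = 0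
          rw [dotProduct_smul, hPz, smul_zero]
        rw [sub_dotProduct, smul_dotProduct, hu1 P hPA, smul_eq_mul,
          mul_one, sub_eq_zero] at h1
        exact h1
      · rintro ⟨⟨hPne, hPS⟩, hPc⟩
        refine ⟨hPS, ?_⟩
        have hnz := hothers P hPS hPne
        have hPA : P ∈ A := Finset.mem_erase.mpr ⟨hPne, hPS⟩
        have h1 : (y - c • y₀) ⬝ᵥ u P = 0 := by
          rw [sub_dotProduct, smul_dotProduct, hu1 P hPA, smul_eq_mul,
            mul_one, hPc, sub_self]
        have hx : xRep P = (y₀ ⬝ᵥ xRep P) • u P := by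
          show xRep P = (y₀ ⬝ᵥ xRep P) • ((y₀ ⬝ᵥ xRep P)⁻¹ • xRep P)
          rw [smul_smul, mul_inv_cancel₀ hnz, one_smul]
        rw [hx, dotProduct_smul, h1, smul_zero]
    rw [hset] at hk
    exact hk
  -- v ≥ 2
  have hv2 : 2 ≤ v := by
    by_contra h
    push_neg at h
    have hv : v = 1 := by omega
    subst hv
    have h2A : 1 < A.card := by omega
    obtain ⟨P, hP, Q, hQ, hPQ⟩ := Finset.one_lt_card.mp h2A
    have h1 := hu1 P hP
    have h2 := hu1 Q hQ
    apply hPQ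
    apply huinj P hP Q hQ
    have hy0 : y₀ 0 ≠ 0 := by
      intro h0
      apply hy₀ne
      funext i
      rw [Subsingleton.elim i 0]
      simpa using h0
    have e1 : y₀ 0 * u P 0 = 1 := by
      rw [← h1]; simp [dotProduct, Fin.sum_univ_one]
    have e2 : y₀ 0 * u Q 0 = 1 := by
      rw [← h2]; simp [dotProduct, Fin.sum_univ_one]
    funext i
    have hi : i = 0 := Subsingleton.elim _ _
    subst hi
    have : y₀ 0 * u P 0 = y₀ 0 * u Q 0 := by rw [e1, e2]
    exact mul_left_cancel₀ hy0 this
  obtain ⟨m, hm⟩ : ∃ m, v = m + 2 := ⟨v - 2, by omega⟩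
  -- structure of fibers: one fiber of size 3, all others of size 1
  have hstruct : ∀ y : Fin v → F, y ⬝ᵥ p ≠ 0 → ∃ c₃ : F,
      (A.filter fun P => y ⬝ᵥ u P = c₃).card = 3 ∧
      ∀ c : F, c ≠ c₃ → (A.filter fun P => y ⬝ᵥ u P = c).card = 1 := by
    intro y hyp
    set N : F → ℕ := fun c => (A.filter fun P => y ⬝ᵥ u P = c).card with hN
    have hsum : ∑ c ∈ (univ : Finset F), N c = q + 2 := by
      rw [← hAcard]
      exact (Finset.card_eq_sum_card_fiberwise (fun P _ => Finset.mem_univ (y ⬝ᵥ u P))).symm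
    have hodd : ∀ c, Odd (N c) := hfib y hyp
    have hsum2 : ∑ c ∈ (univ : Finset F), (N c - 1) = 2 := by
      have h1 : ∑ c ∈ (univ : Finset F), ((N c - 1) + 1) = ∑ c ∈ univ, N c := by
        apply Finset.sum_congr rfl
        intro c _
        rcases hodd c with ⟨k, hk⟩
        omega
      rw [Finset.sum_add_distrib, Finset.sum_const, smul_eq_mul, mul_one, hsum] at h1
      have hcF : (univ : Finset F).card = q := Finset.card_univ
      omega
    have hex : ∃ c₃, N c₃ - 1 ≠ 0 := by
      by_contra hc
      push_neg at hc
      rw [Finset.sum_eq_zero (fun c _ => hc c)] at hsum2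
      omega
    obtain ⟨c₃, hc₃⟩ := hex
    have hle : N c₃ - 1 ≤ 2 := by
      rw [← hsum2]
      exact Finset.single_le_sum (f := fun c => N c - 1) (fun _ _ => Nat.zero_le _)
        (Finset.mem_univ c₃)
    have hNc₃ : N c₃ = 3 := by
      rcases hodd c₃ with ⟨k, hk⟩
      omega
    refine ⟨c₃, hNc₃, ?_⟩
    intro c hc
    have hpair : (N c - 1) + (N c₃ - 1) ≤ 2 := by
      have hsub : ({c, c₃} : Finset F) ⊆ univ := fun x _ => Finset.mem_univ x
      have h6 : ∑ c' ∈ ({c, c₃} : Finset F), (N c' - 1)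
          ≤ ∑ c' ∈ (univ : Finset F), (N c' - 1) :=
        Finset.sum_le_sum_of_subset hsub
      rw [Finset.sum_pair hc, hsum2] at h6
      exact h6
    rcases hodd c with ⟨k, hk⟩
    have hfin : N c = 1 := by omega
    exact hfin
  -- the Finset of functionals not vanishing on p
  set Y : Finset (Fin v → F) := univ.filter (fun y => ¬ y ⬝ᵥ p = 0) with hY
  have hZp : ((univ : Finset (Fin v → F)).filter fun y => y ⬝ᵥ p = 0).card * q = q ^ v :=
    card_perp_one hp0
  have hpowv1 : q ^ v = q ^ (m+1) * q := by rw [hm, pow_succ]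
  have hpowv2 : q ^ v = q ^ (m+2) := by rw [hm]
  have hZpval : ((univ : Finset (Fin v → F)).filter fun y => y ⬝ᵥ p = 0).card = q ^ (m+1) := by
    rw [hpowv1] at hZp
    exact Nat.eq_of_mul_eq_mul_right (by omega) hZp
  have hYcard : Y.card + q ^ (m+1) = q ^ (m+2) := by
    have hsplit := my_filter_split (univ : Finset (Fin v → F)) (fun y => y ⬝ᵥ p = 0)
    rw [hZpval, huniv, hpowv2] at hsplit
    rw [hY]
    omega
  have hYpos : 0 < Y.card := by
    have hlt : q^(m+1) < q^(m+2) := Nat.pow_lt_pow_right hq1 (by omega)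
    omega
  -- each y in Y gives exactly 6 ordered equal pairs
  have hclaim1 : ∀ y ∈ Y, (A.offDiag.filter fun z => y ⬝ᵥ (u z.1 - u z.2) = 0).card = 6 := by
    intro y hy
    rw [hY, Finset.mem_filter] at hy
    obtain ⟨c₃, h3, h1⟩ := hstruct y hy.2
    set f : PGPoint F v → F := fun P => y ⬝ᵥ u P with hf
    have h3' : (A.filter fun P => f P = c₃).card = 3 := h3
    have h1' : ∀ c : F, c ≠ c₃ → (A.filter fun P => f P = c).card = 1 := h1
    have hcongr : (A.offDiag.filter fun z => y ⬝ᵥ (u z.1 - u z.2) = 0)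
        = A.offDiag.filter (fun z => f z.1 = f z.2) := by
      ext z
      simp only [Finset.mem_filter]
      apply and_congr Iff.rfl
      simp only [hf]
      rw [dotProduct_sub, sub_eq_zero]
    rw [hcongr, card_offdiag_fiber A f]
    have hc₃mem : c₃ ∈ A.image f := by
      have hne : (A.filter fun P => f P = c₃).Nonempty := by
        rw [← Finset.card_pos, h3']; omega
      obtain ⟨P, hP⟩ := hne
      rw [Finset.mem_filter] at hP
      exact Finset.mem_image.mpr ⟨P, hP.1, hP.2⟩
    rw [Finset.sum_eq_single_of_mem c₃ hc₃mem (fun c _ hcne => by simp [h1' c hcne]), h3']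
  have hswap : (∑ y ∈ Y, (A.offDiag.filter fun z => y ⬝ᵥ (u z.1 - u z.2) = 0).card)
      = ∑ z ∈ A.offDiag, (Y.filter fun y => y ⬝ᵥ (u z.1 - u z.2) = 0).card :=
    sum_card_filter_comm Y A.offDiag (fun y z => y ⬝ᵥ (u z.1 - u z.2) = 0)
  set PP : Finset (PGPoint F v × PGPoint F v) :=
    A.offDiag.filter (fun z => u z.1 - u z.2 ∉ Submodule.span F {p}) with hPP
  set w : ℕ := q^(m+1) - q^m with hww
  have hwq : w + q^m = q^(m+1) := by
    have hle : q^m ≤ q^(m+1) := Nat.pow_le_pow_right (by omega) (by omega)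
    omega
  have hinner2 : ∀ z ∈ A.offDiag, (Y.filter fun y => y ⬝ᵥ (u z.1 - u z.2) = 0).card
      = if u z.1 - u z.2 ∉ Submodule.span F {p} then w else 0 := by
    intro z hz
    rw [Finset.mem_offDiag] at hz
    obtain ⟨hz1, hz2, hzne⟩ := hz
    have hd0 : u z.1 - u z.2 ≠ 0 := hune _ hz1 _ hz2 hzne
    by_cases hmem : u z.1 - u z.2 ∈ Submodule.span F {p}
    · rw [if_neg (not_not_intro hmem)]
      apply Finset.card_eq_zero.mpr
      apply Finset.filter_eq_empty_iff.mpr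
      intro y hy hcon
      rw [hY, Finset.mem_filter] at hy
      obtain ⟨a, ha⟩ := Submodule.mem_span_singleton.mp hmem
      have ha0 : a ≠ 0 := by
        rintro rfl
        rw [zero_smul] at ha
        exact hd0 ha.symm
      rw [← ha, dotProduct_smul, smul_eq_mul] at hcon
      exact hy.2 ((mul_eq_zero.mp hcon).resolve_left ha0)
    · rw [if_pos hmem]
      have hZd := card_perp_one hd0
      rw [hpowv1] at hZd
      have hZdval : ((univ : Finset (Fin v → F)).filter
          fun y => y ⬝ᵥ (u z.1 - u z.2) = 0).card = q ^ (m+1) :=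
        Nat.eq_of_mul_eq_mul_right (by omega) hZd
      have hps : p ∉ Submodule.span F {u z.1 - u z.2} := not_mem_span_symm hp0 hmem
      have hZdp := card_perp_two hd0 hps
      have hpowv3 : q ^ v = q ^ m * q ^ 2 := by rw [hm, pow_add]
      have hZdpval : ((univ : Finset (Fin v → F)).filter
          fun y => y ⬝ᵥ (u z.1 - u z.2) = 0 ∧ y ⬝ᵥ p = 0).card = q ^ m := by
        rw [hpowv3] at hZdp
        exact Nat.eq_of_mul_eq_mul_right (pow_pos (by omega : 0 < q) 2) hZdp
      have hsplit2 := my_filter_split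
        ((univ : Finset (Fin v → F)).filter fun y => y ⬝ᵥ (u z.1 - u z.2) = 0)
        (fun y => y ⬝ᵥ p = 0)
      have hff : (((univ : Finset (Fin v → F)).filter
          fun y => y ⬝ᵥ (u z.1 - u z.2) = 0).filter fun y => y ⬝ᵥ p = 0)
          = (univ : Finset (Fin v → F)).filter
            (fun y => y ⬝ᵥ (u z.1 - u z.2) = 0 ∧ y ⬝ᵥ p = 0) :=
        Finset.filter_filter _ _ _
      rw [hff, hZdpval, hZdval] at hsplit2
      have hYf : Y.filter (fun y => y ⬝ᵥ (u z.1 - u z.2) = 0)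
          = ((univ : Finset (Fin v → F)).filter
              fun y => y ⬝ᵥ (u z.1 - u z.2) = 0).filter (fun y => ¬ y ⬝ᵥ p = 0) := by
        rw [hY]
        exact Finset.filter_comm _ _ _
      rw [hYf]
      omega
  have hPPcard : PP.card = 6 * q := by
    have hL : ∑ y ∈ Y, (A.offDiag.filter fun z => y ⬝ᵥ (u z.1 - u z.2) = 0).card
        = 6 * Y.card := by
      rw [Finset.sum_congr rfl hclaim1, Finset.sum_const, smul_eq_mul, mul_comm]
    have hR : ∑ z ∈ A.offDiag, (Y.filter fun y => y ⬝ᵥ (u z.1 - u z.2) = 0).card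
        = PP.card * w := by
      rw [Finset.sum_congr rfl hinner2, Finset.sum_ite, Finset.sum_const,
        Finset.sum_const_zero, add_zero, smul_eq_mul, hPP]
    rw [hL, hR] at hswap
    have hYw : Y.card = q * w := by
      have h1 : q * w + q * q^m = q * q^(m+1) := by rw [← Nat.left_distrib, hwq]
      have h2 : q * q^m = q^(m+1) := by rw [pow_succ]; exact mul_comm _ _
      have h3 : q * q^(m+1) = q^(m+2) := by rw [pow_succ]; exact mul_comm _ _
      have h4 : q * w + q ^ (m+1) = q ^ (m+2) := by rw [← h2, ← h3]; exact h1
      exact Nat.add_right_cancel (hYcard.trans h4.symm)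
    have hwpos : 0 < w := by
      have h4 : 1 ≤ q^m := Nat.one_le_pow _ _ (by omega)
      have h5 : q^m < q^(m+1) := Nat.pow_lt_pow_right hq1 (by omega)
      omega
    have h6 : (6 * q) * w = PP.card * w := by
      rw [← hswap, hYw]; ring
    exact (Nat.eq_of_mul_eq_mul_right hwpos h6).symm
  -- classes modulo the direction p
  set cls : PGPoint F v → ((Fin v → F) ⧸ Submodule.span F {p}) :=
    fun P => Submodule.Quotient.mk (u P) with hcls
  have hclseq : ∀ P Q : PGPoint F v, cls P = cls Q ↔ u P - u Q ∈ Submodule.span F {p} :=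
    fun P Q => Submodule.Quotient.eq _
  set PL : Finset (PGPoint F v × PGPoint F v) :=
    A.offDiag.filter (fun z => u z.1 - u z.2 ∈ Submodule.span F {p}) with hPL
  have hoffcard : A.offDiag.card = (q+2) * (q+1) := by
    have h7 : (q+2) * (q+2) = (q+2)*(q+1) + (q+2) := by ring
    rw [Finset.offDiag_card, hAcard, h7]
    exact Nat.add_sub_cancel _ _
  have hPLPP : PL.card + PP.card = (q+2)*(q+1) := by
    have h := my_filter_split A.offDiag (fun z => u z.1 - u z.2 ∈ Submodule.span F {p})
    rw [hoffcard] at h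
    rw [hPL, hPP]
    exact h
  have hPLfib : PL.card = ∑ t ∈ A.image cls,
      ((A.filter fun P => cls P = t).card * ((A.filter fun P => cls P = t).card - 1)) := by
    have hPLeq : PL = A.offDiag.filter (fun z => cls z.1 = cls z.2) := by
      rw [hPL]
      ext z
      simp only [Finset.mem_filter]
      exact and_congr Iff.rfl (hclseq z.1 z.2).symm
    rw [hPLeq, card_offdiag_fiber A cls]
  have hsumk : ∑ t ∈ A.image cls, (A.filter fun P => cls P = t).card = q + 2 := by
    rw [← hAcard]
    exact (Finset.card_eq_sum_card_fiberwise
      (fun P hP => Finset.mem_image_of_mem cls hP)).symm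
  have hInonempty : (A.image cls).Nonempty := by
    rw [Finset.image_nonempty, ← Finset.card_pos, hAcard]; omega
  obtain ⟨t₁, ht₁, hmax⟩ := Finset.exists_max_image (A.image cls)
    (fun t => (A.filter fun P => cls P = t).card) hInonempty
  set B : Finset (PGPoint F v) := A.filter (fun P => cls P = t₁) with hB
  set RR : Finset (PGPoint F v) := A.filter (fun P => ¬ cls P = t₁) with hRR
  have hBRsum : B.card + RR.card = q + 2 := by
    have h := my_filter_split A (fun P => cls P = t₁)
    rw [hAcard] at h
    rw [hB, hRR]
    exact h
  have hBsubA : B ⊆ A := Finset.filter_subset _ _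
  have hRsubA : RR ⊆ A := Finset.filter_subset _ _
  have hparne : ∀ P ∈ A, ∀ Q ∈ A, P ≠ Q → cls P = cls Q →
      ∀ y : Fin v → F, y ⬝ᵥ p ≠ 0 → y ⬝ᵥ (u P - u Q) ≠ 0 := by
    intro P hP Q hQ hne hc y hyp
    obtain ⟨a, ha⟩ := Submodule.mem_span_singleton.mp ((hclseq P Q).mp hc)
    have ha0 : a ≠ 0 := by
      rintro rfl
      rw [zero_smul] at ha
      exact hune P hP Q hQ hne ha.symm
    rw [← ha, dotProduct_smul, smul_eq_mul]
    exact mul_ne_zero ha0 hyp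
  -- two elements of RR in distinct classes
  have hRRtwo : ∃ Pu ∈ RR, ∃ Pv ∈ RR, cls Pu ≠ cls Pv := by
    obtain ⟨y', hy'⟩ := Finset.card_pos.mp hYpos
    have hy'2 : ¬ y' ⬝ᵥ p = 0 := (Finset.mem_filter.mp hy').2
    obtain ⟨c₃, h3, -⟩ := hstruct y' hy'2
    rw [Finset.card_eq_three] at h3
    obtain ⟨Pa, Pb, Pc, hab, hac, hbc, hT⟩ := h3
    have hmemT : ∀ X : PGPoint F v, X ∈ ({Pa, Pb, Pc} : Finset (PGPoint F v)) →
        X ∈ A ∧ y' ⬝ᵥ u X = c₃ := by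
      intro X hX
      rw [← hT] at hX
      exact Finset.mem_filter.mp hX
    obtain ⟨haA, hav⟩ := hmemT Pa (by simp)
    obtain ⟨hbA, hbv⟩ := hmemT Pb (by simp)
    obtain ⟨hcA, hcv⟩ := hmemT Pc (by simp)
    have hdist : ∀ X Z : PGPoint F v, X ∈ A → Z ∈ A → X ≠ Z →
        y' ⬝ᵥ u X = c₃ → y' ⬝ᵥ u Z = c₃ → cls X ≠ cls Z := by
      intro X Z hX hZ hne h1 h2 hcc
      apply hparne X hX Z hZ hne hcc y' hy'2
      rw [dotProduct_sub, h1, h2, sub_self]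
    have hdab := hdist Pa Pb haA hbA hab hav hbv
    have hdac := hdist Pa Pc haA hcA hac hav hcv
    have hdbc := hdist Pb Pc hbA hcA hbc hbv hcv
    by_cases ha1 : cls Pa = t₁
    · refine ⟨Pb, ?_, Pc, ?_, hdbc⟩
      · rw [hRR, Finset.mem_filter]
        exact ⟨hbA, fun h => hdab (ha1.trans h.symm)⟩
      · rw [hRR, Finset.mem_filter]
        exact ⟨hcA, fun h => hdac (ha1.trans h.symm)⟩
    · by_cases hb1 : cls Pb = t₁
      · refine ⟨Pa, ?_, Pc, ?_, hdac⟩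
        · rw [hRR, Finset.mem_filter]; exact ⟨haA, ha1⟩
        · rw [hRR, Finset.mem_filter]
          exact ⟨hcA, fun h => hdbc (hb1.trans h.symm)⟩
      · refine ⟨Pa, ?_, Pb, ?_, hdab⟩
        · rw [hRR, Finset.mem_filter]; exact ⟨haA, ha1⟩
        · rw [hRR, Finset.mem_filter]; exact ⟨hbA, hb1⟩
  -- RR is small
  have hRRle3 : RR.card ≤ 3 := by
    by_contra hs4
    push_neg at hs4
    -- B.card ≥ 4
    have hk14 : 4 ≤ B.card := by
      by_contra hk
      push_neg at hk
      have hb1 : ∀ t ∈ A.image cls,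
          (A.filter fun P => cls P = t).card * ((A.filter fun P => cls P = t).card - 1)
            ≤ (A.filter fun P => cls P = t).card * 2 := by
        intro t ht
        apply Nat.mul_le_mul_left
        have h8 : (A.filter fun P => cls P = t).card ≤ B.card := by
          rw [hB]
          exact hmax t ht
        omega
      have hPLle : PL.card ≤ 2 * (q+2) := by
        rw [hPLfib]
        calc ∑ t ∈ A.image cls, ((A.filter fun P => cls P = t).card *
              ((A.filter fun P => cls P = t).card - 1))
            ≤ ∑ t ∈ A.image cls, (A.filter fun P => cls P = t).card * 2 :=
              Finset.sum_le_sum hb1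
          _ = (q+2) * 2 := by rw [← Finset.sum_mul, hsumk]
          _ = 2 * (q+2) := mul_comm _ _
      rw [hPPcard] at hPLPP
      have hqq : (q+2)*(q+1) = q*q + 3*q + 2 := by ring
      have hqq8 : 8*q ≤ q*q := Nat.mul_le_mul hq8 (le_refl q)
      omega
    obtain ⟨Pu, hPu, Pv, hPv, huv⟩ := hRRtwo
    set CR : Finset (PGPoint F v × PGPoint F v) :=
      RR.offDiag.filter (fun z => ¬ cls z.1 = cls z.2) with hCR
    have hCRcard : RR.card ≤ CR.card := by
      have hφ : ∀ P ∈ RR, (P, if cls P = cls Pu then Pv else Pu) ∈ CR := by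
        intro P hP
        by_cases hc : cls P = cls Pu
        · rw [if_pos hc, hCR, Finset.mem_filter, Finset.mem_offDiag]
          have hPPv : P ≠ Pv := by
            rintro rfl
            exact huv hc.symm
          exact ⟨⟨hP, hPv, hPPv⟩, fun h => huv (hc.symm.trans h)⟩
        · rw [if_neg hc, hCR, Finset.mem_filter, Finset.mem_offDiag]
          have hPPu : P ≠ Pu := by
            rintro rfl
            exact hc rfl
          exact ⟨⟨hP, hPu, hPPu⟩, hc⟩
      apply Finset.card_le_card_of_injOn (fun P => (P, if cls P = cls Pu then Pv else Pu)) hφ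
      intro a _ b _ hab
      exact congrArg Prod.fst hab
    have hBRdisj : Disjoint B RR := by
      rw [hB, hRR]
      exact Finset.disjoint_filter_filter_not A A _
    have hsub1 : B ×ˢ RR ⊆ PP := by
      intro z hz
      rw [Finset.mem_product] at hz
      obtain ⟨h1, h2⟩ := hz
      rw [hB, Finset.mem_filter] at h1
      rw [hRR, Finset.mem_filter] at h2
      have hne : z.1 ≠ z.2 := by
        rintro hzz
        exact h2.2 (hzz ▸ h1.2)
      rw [hPP, Finset.mem_filter, Finset.mem_offDiag]
      refine ⟨⟨h1.1, h2.1, hne⟩, ?_⟩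
      intro hmem
      exact h2.2 (((hclseq z.1 z.2).mpr hmem).symm.trans h1.2)
    have hsub2 : RR ×ˢ B ⊆ PP := by
      intro z hz
      rw [Finset.mem_product] at hz
      obtain ⟨h1, h2⟩ := hz
      rw [hRR, Finset.mem_filter] at h1
      rw [hB, Finset.mem_filter] at h2
      have hne : z.1 ≠ z.2 := by
        rintro hzz
        exact h1.2 (hzz.symm ▸ h2.2)
      rw [hPP, Finset.mem_filter, Finset.mem_offDiag]
      refine ⟨⟨h1.1, h2.1, hne⟩, ?_⟩
      intro hmem
      exact h1.2 (((hclseq z.1 z.2).mpr hmem).trans h2.2)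
    have hsub3 : CR ⊆ PP := by
      intro z hz
      rw [hCR, Finset.mem_filter, Finset.mem_offDiag] at hz
      obtain ⟨⟨h1, h2, hne⟩, hcc⟩ := hz
      rw [hPP, Finset.mem_filter, Finset.mem_offDiag]
      refine ⟨⟨hRsubA h1, hRsubA h2, hne⟩, ?_⟩
      intro hmem
      exact hcc ((hclseq z.1 z.2).mpr hmem)
    have hd12 : Disjoint (B ×ˢ RR) (RR ×ˢ B) := by
      rw [Finset.disjoint_left]
      intro z hz1 hz2
      rw [Finset.mem_product] at hz1 hz2
      exact (Finset.disjoint_left.mp hBRdisj) hz1.1 hz2.1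
    have hd13 : Disjoint (B ×ˢ RR ∪ RR ×ˢ B) CR := by
      rw [Finset.disjoint_left]
      intro z hz1 hz2
      rw [hCR, Finset.mem_filter, Finset.mem_offDiag] at hz2
      rw [Finset.mem_union, Finset.mem_product, Finset.mem_product] at hz1
      rcases hz1 with h | h
      · exact (Finset.disjoint_left.mp hBRdisj) h.1 hz2.1.1
      · exact (Finset.disjoint_left.mp hBRdisj) h.2 hz2.1.2.1
    have hcards : B.card * RR.card + RR.card * B.card + CR.card ≤ PP.card := by
      have hcu : ((B ×ˢ RR ∪ RR ×ˢ B) ∪ CR).card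
          = B.card * RR.card + RR.card * B.card + CR.card := by
        rw [Finset.card_union_of_disjoint hd13, Finset.card_union_of_disjoint hd12,
          Finset.card_product, Finset.card_product]
      rw [← hcu]
      apply Finset.card_le_card
      intro z hz
      rw [Finset.mem_union, Finset.mem_union] at hz
      rcases hz with (h | h) | h
      · exact hsub1 h
      · exact hsub2 h
      · exact hsub3 h
    rw [hPPcard] at hcards
    -- arithmetic contradiction
    have hstep := le_trans (Nat.add_le_add_left hCRcard _) hcards
    have hs4' : 4 ≤ RR.card := hs4
    obtain ⟨b', hb'⟩ := Nat.exists_eq_add_of_le hk14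
    obtain ⟨r', hr'⟩ := Nat.exists_eq_add_of_le hs4'
    rw [hb', hr'] at hstep hBRsum
    have heq : (4 + b') * (4 + r') = 16 + 4*b' + 4*r' + b'*r' := by ring
    have heq2 : (4 + r') * (4 + b') = 16 + 4*b' + 4*r' + b'*r' := by ring
    rw [heq, heq2] at hstep
    omega
  -- final contradiction: pick a functional separating the few points of RR
  set Dset : Finset (Fin v → F) :=
    insert p ((RR.offDiag).image (fun z => u z.1 - u z.2)) with hDset
  have hDcard : Dset.card < q := by
    have h1 : Dset.card ≤ ((RR.offDiag).image (fun z => u z.1 - u z.2)).card + 1 :=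
      Finset.card_insert_le _ _
    have h2 : ((RR.offDiag).image (fun z => u z.1 - u z.2)).card ≤ RR.offDiag.card :=
      Finset.card_image_le
    have h3 : RR.offDiag.card ≤ 6 := by
      calc RR.offDiag.card = RR.card * RR.card - RR.card := Finset.offDiag_card RR
        _ ≤ 3 * RR.card - RR.card := by
            apply Nat.sub_le_sub_right
            exact Nat.mul_le_mul hRRle3 (le_refl _)
        _ ≤ 6 := by omega
    omega
  have h0D : (0 : Fin v → F) ∉ Dset := by
    rw [hDset, Finset.mem_insert]
    rintro (h | h)
    · exact hp0 h.symm
    · rw [Finset.mem_image] at h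
      obtain ⟨z, hz, hz0⟩ := h
      rw [Finset.mem_offDiag] at hz
      exact hune z.1 (hRsubA hz.1) z.2 (hRsubA hz.2.1) hz.2.2 hz0
  obtain ⟨ys, hys⟩ := exists_avoid (by omega) Dset hDcard h0D
  have hysp : ys ⬝ᵥ p ≠ 0 := hys p (Finset.mem_insert_self _ _)
  obtain ⟨c₃, h3, -⟩ := hstruct ys hysp
  rw [Finset.card_eq_three] at h3
  obtain ⟨Pa, Pb, Pc, hab, hac, hbc, hT⟩ := h3
  have hmemT : ∀ X : PGPoint F v, X ∈ ({Pa, Pb, Pc} : Finset (PGPoint F v)) →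
      X ∈ A ∧ ys ⬝ᵥ u X = c₃ := by
    intro X hX
    rw [← hT] at hX
    exact Finset.mem_filter.mp hX
  obtain ⟨haA, hav⟩ := hmemT Pa (by simp)
  obtain ⟨hbA, hbv⟩ := hmemT Pb (by simp)
  obtain ⟨hcA, hcv⟩ := hmemT Pc (by simp)
  have hnotB : ∀ X Z : PGPoint F v, X ∈ A → Z ∈ A → X ≠ Z →
      ys ⬝ᵥ u X = c₃ → ys ⬝ᵥ u Z = c₃ → cls X = t₁ → cls Z = t₁ → False := by
    intro X Z hX hZ hne h1 h2 hc1 hc2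
    apply hparne X hX Z hZ hne (hc1.trans hc2.symm) ys hysp
    rw [dotProduct_sub, h1, h2, sub_self]
  have hnotR : ∀ X Z : PGPoint F v, X ∈ A → Z ∈ A → X ≠ Z →
      ys ⬝ᵥ u X = c₃ → ys ⬝ᵥ u Z = c₃ → ¬ cls X = t₁ → ¬ cls Z = t₁ → False := by
    intro X Z hX hZ hne h1 h2 hcX hcZ
    have hXR : X ∈ RR := by rw [hRR, Finset.mem_filter]; exact ⟨hX, hcX⟩
    have hZR : Z ∈ RR := by rw [hRR, Finset.mem_filter]; exact ⟨hZ, hcZ⟩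
    have hzD : u X - u Z ∈ Dset := by
      rw [hDset, Finset.mem_insert]
      right
      exact Finset.mem_image.mpr ⟨(X, Z), Finset.mem_offDiag.mpr ⟨hXR, hZR, hne⟩, rfl⟩
    apply hys _ hzD
    rw [dotProduct_sub, h1, h2, sub_self]
  by_cases ha1 : cls Pa = t₁ <;> by_cases hb1 : cls Pb = t₁ <;> by_cases hc1 : cls Pc = t₁
  · exact hnotB Pa Pb haA hbA hab hav hbv ha1 hb1
  · exact hnotB Pa Pb haA hbA hab hav hbv ha1 hb1
  · exact hnotB Pa Pc haA hcA hac hav hcv ha1 hc1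
  · exact hnotR Pb Pc hbA hcA hbc hbv hcv hb1 hc1
  · exact hnotB Pb Pc hbA hcA hbc hbv hcv hb1 hc1
  · exact hnotR Pa Pc haA hcA hac hav hcv ha1 hc1
  · exact hnotR Pa Pb haA hbA hab hav hbv ha1 hb1
  · exact hnotR Pa Pb haA hbA hab hav hbv ha1 hb1

end
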